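/- The total action function I: (0,∞) → ℝ, defined by I(e) = I₀(e) for 0 < e < 2, I(2) = 8/π, and I(e) = 2·I±(e) for e > 2, is continuous at e = 2 (and hence continuous on (0,∞)). -/

import Mathlib

open Real intervalIntegral

lemma sqrt_two_one_add_cos (α : ℝ) (hα : α ∈ Set.uIcc (-π) π) :
    Real.sqrt (2 * (2 - 1 + Real.cos α)) = 2 * Real.cos (α / 2) := by
  have hpi := Real.pi_pos
  rw [Set.uIcc_of_le (by linarith)] at hα
  have hc : 0 ≤ Real.cos (α / 2) :=
    Real.cos_nonneg_of_mem_Icc ⟨by linarith [hα.1], by linarith [hα.2]⟩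
  have h2 : (2:ℝ) * (2 - 1 + Real.cos α) = (2 * Real.cos (α / 2)) ^ 2 := by
    have h := Real.cos_sq (α / 2)
    rw [show 2 * (α/2) = α by ring] at h
    nlinarith
  rw [h2, Real.sqrt_sq (by linarith)]

lemma key_integral :
    (∫ α in (-π)..π, Real.sqrt (2 * ((2:ℝ) - 1 + Real.cos α))) = 8 := by
  rw [intervalIntegral.integral_congr (g := fun α => 2 * Real.cos (α / 2))
      (fun α hα => sqrt_two_one_add_cos α hα)]
  rw [intervalIntegral.integral_const_mul]
  have := intervalIntegral.integral_comp_div (a := -π) (b := π)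
    (c := (2:ℝ)) (f := Real.cos) two_ne_zero
  rw [this, integral_cos]
  have : (-π) / 2 = -(π/2) := by ring
  rw [this, Real.sin_pi_div_two, Real.sin_neg, Real.sin_pi_div_two]
  norm_num

noncomputable def Gfun (e : ℝ) : ℝ :=
  (1 / Real.pi) *
    ∫ α in (-Real.arccos (1 - e))..(Real.arccos (1 - e)),
      Real.sqrt (2 * (e - 1 + Real.cos α))

lemma cont_G : Continuous Gfun := by
  have hf : Continuous (Function.uncurry fun (e α : ℝ) =>
      Real.sqrt (2 * (e - 1 + Real.cos α))) := by
    apply Real.continuous_sqrt.comp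
    fun_prop
  have ha : Continuous fun e : ℝ => Real.arccos (1 - e) :=
    Real.continuous_arccos.comp (by fun_prop)
  have h1 : Continuous fun e : ℝ =>
      ∫ α in (0:ℝ)..(Real.arccos (1 - e)), Real.sqrt (2 * (e - 1 + Real.cos α)) :=
    intervalIntegral.continuous_parametric_intervalIntegral_of_continuous hf ha
  have h2 : Continuous fun e : ℝ =>
      ∫ α in (0:ℝ)..(-Real.arccos (1 - e)), Real.sqrt (2 * (e - 1 + Real.cos α)) :=
    intervalIntegral.continuous_parametric_intervalIntegral_of_continuous hf ha.neg
  have hG : Gfun = fun e => (1 / Real.pi) *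
      ((∫ α in (0:ℝ)..(Real.arccos (1 - e)), Real.sqrt (2 * (e - 1 + Real.cos α))) -
       ∫ α in (0:ℝ)..(-Real.arccos (1 - e)), Real.sqrt (2 * (e - 1 + Real.cos α))) := by
    funext e
    have hint : ∀ a b : ℝ, IntervalIntegrable
        (fun α => Real.sqrt (2 * (e - 1 + Real.cos α))) MeasureTheory.volume a b := by
      intro a b
      exact (Real.continuous_sqrt.comp (by fun_prop)).intervalIntegrable a b
    unfold Gfun
    rw [← intervalIntegral.integral_add_adjacent_intervals (b := (0:ℝ))
      (hint _ _) (hint _ _), intervalIntegral.integral_symm]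
    ring
  rw [hG]
  exact continuous_const.mul (h1.sub h2)

/-- The total action `I : (0,∞) → ℝ`, equal to `I₀(e)` for `0 < e < 2`, to `8/π` at `e = 2`,
and to `2 I±(e)` for `e > 2`, is continuous at `e = 2`, and hence continuous on `(0,∞)`. -/
theorem stmt_7 (I : ℝ → ℝ)
    (h0 : ∀ e ∈ Set.Ioo (0 : ℝ) 2,
      I e = (1 / Real.pi) *
        ∫ α in (-Real.arccos (1 - e))..(Real.arccos (1 - e)),
          Real.sqrt (2 * (e - 1 + Real.cos α)))
    (h2 : I 2 = 8 / Real.pi)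
    (hp : ∀ e : ℝ, 2 < e →
      I e = 2 * ((1 / (2 * Real.pi)) *
        ∫ α in (-Real.pi)..Real.pi, Real.sqrt (2 * (e - 1 + Real.cos α)))) :
    ContinuousAt I 2 ∧ ContinuousOn I (Set.Ioi 0) := by
  have hpi := Real.pi_pos
  have hpin : Real.pi ≠ 0 := ne_of_gt hpi
  have harc : ∀ e : ℝ, 2 ≤ e → Real.arccos (1 - e) = π := by
    intro e he
    exact Real.arccos_eq_pi.mpr (by linarith)
  have heq : ∀ e ∈ Set.Ioi (0:ℝ), I e = Gfun e := by
    intro e he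
    rcases lt_trichotomy e 2 with h | h | h
    · exact h0 e ⟨he, h⟩
    · subst h
      unfold Gfun
      rw [harc 2 le_rfl, key_integral, h2]
      field_simp
    · rw [hp e h]
      unfold Gfun
      rw [harc e h.le]
      field_simp
  constructor
  · have hev : I =ᶠ[nhds 2] Gfun :=
      Filter.eventuallyEq_of_mem (Ioi_mem_nhds (by norm_num)) heq
    exact (cont_G.continuousAt).congr hev.symm
  · exact (cont_G.continuousOn).congr heq
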